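/- If n is a positive integer with z(n) − (r(n)+1)·m(n) < 0, then n ≤ 560; equivalently, x(n) > 0 for all n ≥ 561. -/
import Mathlib

theorem pow_ge_aux : ∀ k : ℕ, 9 * (k + 12) ^ 2 + 2 ≤ 2 ^ (k + 11) := by
  intro k
  induction k with
  | zero => norm_num
  | succ k ih =>
    have h2 : 2 ^ (k + 1 + 11) = 2 * 2 ^ (k + 11) := by ring
    rw [h2]
    have h4 : 9 * (k + 1 + 12) ^ 2 + 2 ≤ 2 * (9 * (k + 12) ^ 2 + 2) := by nlinarith [sq_nonneg k, k.zero_le]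
    have h5 : 2 * (9 * (k + 12) ^ 2 + 2) ≤ 2 * 2 ^ (k + 11) := by omega
    omega

theorem stmt
    (z : ℕ → ℤ) (m r : ℕ → ℕ) (c x : ℕ → ℤ) (y : ℕ → ℚ)
    (hz : ∀ n : ℕ, 1 ≤ n → 3 * z n < 2 * (n : ℤ) ∧ ∀ w : ℤ, 3 * w < 2 * (n : ℤ) → w ≤ z n)
    (hm : ∀ n : ℕ, 1 ≤ n → (m n : ℤ) ^ 2 ≤ 2 * (n : ℤ) ∧ ∀ w : ℕ, (w : ℤ) ^ 2 ≤ 2 * (n : ℤ) → w ≤ m n)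
    (hr : ∀ n : ℕ, 1 ≤ n → n ≤ 2 ^ r n ∧ ∀ s : ℕ, n ≤ 2 ^ s → r n ≤ s)
    (hc : ∀ n : ℕ, c n = 2 * (n : ℤ) - 2 * z n + 2)
    (hx : ∀ n : ℕ, x n = z n - ((r n : ℤ) + 1) * (m n : ℤ))
    (hy : ∀ n : ℕ, y n = (2 : ℚ) ^ (c n - (m n : ℤ)) - (n : ℚ) ^ ((m n : ℤ) - 1)) :
    (∀ n : ℕ, 1 ≤ n → x n < 0 → n ≤ 560) ∧ (∀ n : ℕ, 561 ≤ n → x n > 0) := by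
  have key : ∀ n : ℕ, 561 ≤ n → x n > 0 := by
    intro n hn
    have h1 : 1 ≤ n := by omega
    obtain ⟨hm1, hm2⟩ := hm n h1
    obtain ⟨hz1, hz2⟩ := hz n h1
    obtain ⟨hr1, hr2⟩ := hr n h1
    set M := m n with hMdef
    set R := r n with hRdef
    -- R ≥ 10
    have hr10 : 10 ≤ R := by
      by_contra h
      push_neg at h
      have h512 : n ≤ 512 := by
        calc n ≤ 2 ^ R := hr1
        _ ≤ 2 ^ 9 := Nat.pow_le_pow_right (by norm_num) (by omega)
        _ = 512 := by norm_num
      omega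
    -- n > 2^(R-1)
    have hn2 : 2 ^ (R - 1) < n := by
      by_contra h
      push_neg at h
      have := hr2 (R - 1) h
      omega
    have hM2 : M ^ 2 ≤ 2 * n := by exact_mod_cast hm1
    have hnz : (561 : ℤ) ≤ (n : ℤ) := by exact_mod_cast hn
    -- key inequality
    have hkey : 3 * (R + 1) * M + 4 ≤ 2 * n := by
      rcases le_or_gt M (3 * (R + 1)) with hc1 | hc1
      · rcases eq_or_lt_of_le hr10 with h10 | h11
        · -- R = 10
          have hn1024 : n ≤ 1024 := by
            have := hr1
            rw [← h10] at this
            norm_num at this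
            exact this
          have hM33 : 33 ≤ M := by
            apply hm2 33
            push_cast
            nlinarith
          rw [← h10] at hc1 ⊢
          omega
        · -- R ≥ 11
          have hpow : 9 * (R + 1) ^ 2 + 2 ≤ 2 ^ R := by
            have := pow_ge_aux (R - 11)
            have hre : R - 11 + 12 = R + 1 := by omega
            have hre2 : R - 11 + 11 = R := by omega
            rw [hre, hre2] at this
            exact this
          have h2n : 2 ^ R + 2 ≤ 2 * n := by
            have : 2 ^ R = 2 * 2 ^ (R - 1) := by
              rw [← pow_succ']
              congr 1
              omega
            omega
          nlinarith
      · -- M ≥ 3(R+1)+1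
        nlinarith [hM2]
    have hw : ((R : ℤ) + 1) * (M : ℤ) + 1 ≤ z n := by
      apply hz2
      have : (3 * (R + 1) * M + 4 : ℤ) ≤ 2 * n := by exact_mod_cast hkey
      linarith
    rw [hx n]
    linarith
  constructor
  · intro n hn hxn
    by_contra h
    push_neg at h
    have := key n (by omega)
    linarith
  · exact key
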